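/- Fix α ∈ (0,1/2) and γ ∈ (0,α). There exists a function c : [0,1) → [0, z_{1−γ}] such that for every ω ∈ [0,1), P(Z1 > min{z_{1−α+γ}, Z̃2 + c(ω)}) = α, where (Z1, Z̃2) is the centered bivariate Gaussian vector associated with ω; moreover c is continuous on [0,1) and c(0) = z_{1−α}. -/

import Mathlib

open MeasureTheory ProbabilityTheory Real

/-- The standard normal distribution on `ℝ`. -/
noncomputable def stdNormal : Measure ℝ := gaussianReal 0 1

/-- The product of two independent standard normals on `ℝ × ℝ`. -/
noncomputable def stdNormal2 : Measure (ℝ × ℝ) := stdNormal.prod stdNormal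

/-- For `ω ∈ [0,1)`, the pair `(Z₁, Z̃₂)` with `Z₁ p = p.1` and
`Z̃₂ p = ω * p.1 + √(ω - ω²) * p.2` is, under `stdNormal2`, a centered bivariate Gaussian
vector with covariance matrix `[[1, ω], [ω, ω]]`. -/
noncomputable def Ztilde2 (ω : ℝ) (p : ℝ × ℝ) : ℝ := ω * p.1 + Real.sqrt (ω - ω ^ 2) * p.2

open Filter Topology
open scoped NNReal ENNReal

instance : IsProbabilityMeasure stdNormal := by unfold stdNormal; infer_instance
instance : IsProbabilityMeasure stdNormal2 := by unfold stdNormal2; infer_instance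
instance : stdNormal.IsOpenPosMeasure :=
  (gaussianReal_absolutelyContinuous' 0 one_ne_zero).isOpenPosMeasure
instance : stdNormal2.IsOpenPosMeasure := by unfold stdNormal2; infer_instance

lemma pdf_rot {a b : ℝ} (hab : a^2 + b^2 = 1) (hb : b ≠ 0) (x y : ℝ) :
    gaussianPDFReal (a*x) (NNReal.mk (b^2) (sq_nonneg b)) y * gaussianPDFReal 0 1 x
      = gaussianPDFReal (a*y) (NNReal.mk (b^2) (sq_nonneg b)) x * gaussianPDFReal 0 1 y := by
  simp only [gaussianPDFReal_def, NNReal.coe_mk, NNReal.coe_one]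
  rw [mul_mul_mul_comm, ← Real.exp_add, mul_mul_mul_comm _ _ _ (rexp _), ← Real.exp_add]
  congr 1
  have hb2 : b^2 ≠ 0 := pow_ne_zero 2 hb
  field_simp
  ring_nf
  rw [Real.exp_eq_exp]
  linear_combination (1/2) * b⁻¹^2 * (y^2 - x^2) * hab

lemma map_rot {a b : ℝ} (hab : a^2 + b^2 = 1) :
    Measure.map (fun p : ℝ×ℝ => a * p.1 + b * p.2) stdNormal2 = stdNormal := by
  have hmeas : Measurable fun p : ℝ×ℝ => a * p.1 + b * p.2 :=
    (measurable_fst.const_mul a).add (measurable_snd.const_mul b)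
  by_cases hb : b = 0
  · subst hb
    have ha2 : a^2 = 1 := by linarith [hab]
    have hcomp : (fun p : ℝ×ℝ => a * p.1 + 0 * p.2) = (fun x => a * x) ∘ Prod.fst := by
      funext p; simp
    rw [hcomp, ← Measure.map_map (measurable_const_mul a) measurable_fst]
    have hfst : Measure.map Prod.fst stdNormal2 = stdNormal := Measure.fst_prod
    rw [hfst]
    have := gaussianReal_map_const_mul (μ := 0) (v := 1) a
    rw [show stdNormal = gaussianReal 0 1 from rfl, this]
    norm_num
    congr 1
    ext
    simp [ha2]
  · have hv : NNReal.mk (b^2) (sq_nonneg b) ≠ 0 := by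
      intro h
      exact pow_ne_zero 2 hb (by simpa using congrArg NNReal.toReal h)
    have hker : Measurable (fun q : ℝ × ℝ => gaussianPDF (a*q.1) (NNReal.mk (b^2) (sq_nonneg b)) q.2) := by
      simp only [gaussianPDF, gaussianPDFReal_def]
      apply Measurable.ennreal_ofReal
      fun_prop
    ext s hs
    rw [Measure.map_apply hmeas hs]
    rw [show stdNormal2 = stdNormal.prod stdNormal from rfl,
      Measure.prod_apply (hmeas hs)]
    have slice : ∀ x : ℝ, stdNormal (Prod.mk x ⁻¹' ((fun p : ℝ×ℝ => a * p.1 + b * p.2) ⁻¹' s))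
        = ∫⁻ y in s, gaussianPDF (a*x) (NNReal.mk (b^2) (sq_nonneg b)) y := by
      intro x
      have h1 : Measure.map (fun z => b * z + a * x) stdNormal
          = gaussianReal (a*x) (NNReal.mk (b^2) (sq_nonneg b)) := by
        have hc : (fun z : ℝ => b * z + a * x) = (· + a * x) ∘ (fun z => b * z) := rfl
        rw [hc, ← Measure.map_map (measurable_add_const _) (measurable_const_mul b),
          show stdNormal = gaussianReal 0 1 from rfl]
        rw [show ((fun z : ℝ => b * z)) = (b * ·) from rfl, gaussianReal_map_const_mul,
          gaussianReal_map_add_const]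
        norm_num
      have h2 : Prod.mk x ⁻¹' ((fun p : ℝ×ℝ => a * p.1 + b * p.2) ⁻¹' s)
          = (fun z => b * z + a * x) ⁻¹' s := by
        ext z; simp [Set.mem_preimage, add_comm]
      rw [h2, ← Measure.map_apply ((measurable_const_mul b).add_const _) hs, h1,
        gaussianReal_apply _ hv s]
    simp_rw [slice]
    have hg : Measurable fun x : ℝ => ∫⁻ y in s, gaussianPDF (a*x) (NNReal.mk (b^2) (sq_nonneg b)) y := by
      exact Measurable.lintegral_prod_right (ν := volume.restrict s)
        (f := fun x y => gaussianPDF (a*x) (NNReal.mk (b^2) (sq_nonneg b)) y) hker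
    rw [show stdNormal = volume.withDensity (gaussianPDF 0 1) from gaussianReal_of_var_ne_zero 0 one_ne_zero]
    rw [lintegral_withDensity_eq_lintegral_mul _ (measurable_gaussianPDF 0 1) hg]
    simp only [Pi.mul_apply]
    have hpull : ∀ x : ℝ, gaussianPDF 0 1 x * ∫⁻ y in s, gaussianPDF (a*x) (NNReal.mk (b^2) (sq_nonneg b)) y
        = ∫⁻ y in s, gaussianPDF 0 1 x * gaussianPDF (a*x) (NNReal.mk (b^2) (sq_nonneg b)) y := by
      intro x
      rw [lintegral_const_mul _ (measurable_gaussianPDF _ _)]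
    simp_rw [hpull]
    rw [lintegral_lintegral_swap]
    · have inner : ∀ y : ℝ, (∫⁻ x, gaussianPDF 0 1 x * gaussianPDF (a*x) (NNReal.mk (b^2) (sq_nonneg b)) y ∂volume)
          = gaussianPDF 0 1 y := by
        intro y
        have hpt : ∀ x : ℝ, gaussianPDF 0 1 x * gaussianPDF (a*x) (NNReal.mk (b^2) (sq_nonneg b)) y
            = gaussianPDF 0 1 y * gaussianPDF (a*y) (NNReal.mk (b^2) (sq_nonneg b)) x := by
          intro x
          simp only [gaussianPDF]
          rw [← ENNReal.ofReal_mul (gaussianPDFReal_nonneg _ _ _),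
            ← ENNReal.ofReal_mul (gaussianPDFReal_nonneg _ _ _)]
          congr 1
          rw [mul_comm]
          rw [pdf_rot hab hb x y]
          ring
        simp_rw [hpt]
        rw [lintegral_const_mul _ (measurable_gaussianPDF _ _),
          lintegral_gaussianPDF_eq_one _ hv, mul_one]
      simp_rw [inner]
      rw [← withDensity_apply _ hs]
    · apply Measurable.aemeasurable
      change Measurable ((fun q : ℝ × ℝ => gaussianPDF 0 1 q.1) * (fun q : ℝ × ℝ => gaussianPDF (a*q.1) (NNReal.mk (b^2) (sq_nonneg b)) q.2))
      apply Measurable.mul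
      · exact (measurable_gaussianPDF 0 1).comp measurable_fst
      · exact hker

noncomputable def sqq (ω : ℝ) : ℝ := Real.sqrt (ω - ω^2)
noncomputable def uu (ω : ℝ) : ℝ := Real.sqrt (1 - ω)
noncomputable def bb (ω : ℝ) : ℝ := -(sqq ω / uu ω)
noncomputable def linf (ω : ℝ) (p : ℝ × ℝ) : ℝ := uu ω * p.1 + bb ω * p.2
def ESet (zc ω c : ℝ) : Set (ℝ × ℝ) := {p : ℝ × ℝ | min zc (Ztilde2 ω p + c) < p.1}
noncomputable def FF (zc ω c : ℝ) : ℝ := (stdNormal2 (ESet zc ω c)).toReal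

lemma uu_pos {ω : ℝ} (hω : ω < 1) : 0 < uu ω := Real.sqrt_pos.2 (by linarith)

lemma uu_le_one {ω : ℝ} (hω : 0 ≤ ω) : uu ω ≤ 1 := by
  exact (Real.sqrt_le_one).mpr (by linarith)

lemma uu_mul_self {ω : ℝ} (hω : ω < 1) : uu ω * uu ω = 1 - ω :=
  Real.mul_self_sqrt (by linarith)

lemma sqq_sq {ω : ℝ} (hω : ω ∈ Set.Ico (0:ℝ) 1) : sqq ω ^ 2 = ω - ω^2 :=
  Real.sq_sqrt (by nlinarith [hω.1, hω.2])

lemma norm1 {ω : ℝ} (hω : ω ∈ Set.Ico (0:ℝ) 1) : uu ω ^ 2 + bb ω ^ 2 = 1 := by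
  have h1 : (1:ℝ) - ω ≠ 0 := by have := hω.2; intro h; linarith
  have hu := uu_mul_self hω.2
  have hsq : sqq ω ^ 2 = ω - ω^2 := sqq_sq hω
  have hu2 : uu ω ^ 2 = 1 - ω := by rw [pow_two]; exact hu
  rw [bb, neg_pow, div_pow, hsq, hu2]
  field_simp
  ring

lemma linf_continuous (ω : ℝ) : Continuous (linf ω) := by
  unfold linf; fun_prop

lemma linf_measurable (ω : ℝ) : Measurable (linf ω) := (linf_continuous ω).measurable

lemma map_linf {ω : ℝ} (hω : ω ∈ Set.Ico (0:ℝ) 1) :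
    Measure.map (linf ω) stdNormal2 = stdNormal := map_rot (norm1 hω)

lemma measure_linf_preimage {ω : ℝ} (hω : ω ∈ Set.Ico (0:ℝ) 1) {s : Set ℝ}
    (hs : MeasurableSet s) : stdNormal2 (linf ω ⁻¹' s) = stdNormal s := by
  rw [← map_linf hω, Measure.map_apply (linf_measurable ω) hs]

lemma linf_mul {ω : ℝ} (hω : ω ∈ Set.Ico (0:ℝ) 1) (p : ℝ × ℝ) :
    linf ω p * uu ω = (1 - ω) * p.1 - sqq ω * p.2 := by
  have hu : uu ω ≠ 0 := (uu_pos hω.2).ne'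
  have huu := uu_mul_self hω.2
  rw [linf, bb]
  field_simp
  linear_combination p.1 * huu

lemma lt_iff {ω : ℝ} (hω : ω ∈ Set.Ico (0:ℝ) 1) (c : ℝ) (p : ℝ × ℝ) :
    Ztilde2 ω p + c < p.1 ↔ c / uu ω < linf ω p := by
  rw [div_lt_iff₀ (uu_pos hω.2), linf_mul hω]
  show ω * p.1 + sqq ω * p.2 + c < p.1 ↔ _
  constructor <;> intro h <;> linarith

lemma eq_iff {ω : ℝ} (hω : ω ∈ Set.Ico (0:ℝ) 1) (c : ℝ) (p : ℝ × ℝ) :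
    Ztilde2 ω p + c = p.1 ↔ linf ω p = c / uu ω := by
  rw [eq_div_iff (uu_pos hω.2).ne', linf_mul hω]
  show ω * p.1 + sqq ω * p.2 + c = p.1 ↔ _
  constructor <;> intro h <;> linarith

lemma ESet_eq {ω : ℝ} (hω : ω ∈ Set.Ico (0:ℝ) 1) (zc c : ℝ) :
    ESet zc ω c = {p : ℝ × ℝ | zc < p.1} ∪ linf ω ⁻¹' (Set.Ioi (c / uu ω)) := by
  ext p
  simp only [ESet, Set.mem_setOf_eq, Set.mem_union, Set.mem_preimage, Set.mem_Ioi,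
    min_lt_iff, lt_iff hω c p]

lemma isOpen_ESet (zc ω c : ℝ) : IsOpen (ESet zc ω c) := by
  have h : Continuous fun p : ℝ × ℝ => min zc (Ztilde2 ω p + c) := by
    unfold Ztilde2; fun_prop
  exact isOpen_lt h continuous_fst

lemma measure_fstset {s : Set ℝ} (hs : MeasurableSet s) :
    stdNormal2 {p : ℝ × ℝ | p.1 ∈ s} = stdNormal s := by
  have : {p : ℝ × ℝ | p.1 ∈ s} = s ×ˢ (Set.univ : Set ℝ) := by
    ext p; simp [Set.mem_prod]
  rw [this, show stdNormal2 = stdNormal.prod stdNormal from rfl, Measure.prod_prod,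
    measure_univ, mul_one]

lemma stdNormal_singleton (t : ℝ) : stdNormal {t} = 0 :=
  gaussianReal_absolutelyContinuous 0 one_ne_zero (volume_singleton)

lemma stdNormal_Ioi (t : ℝ) : stdNormal (Set.Ioi t) = 1 - stdNormal (Set.Iic t) := by
  have := measure_compl (μ := stdNormal) (measurableSet_Iic (a := t)) (measure_ne_top _ _)
  rwa [Set.compl_Iic, measure_univ] at this

noncomputable def PhiR (t : ℝ) : ℝ := (stdNormal (Set.Iic t)).toReal

lemma stdNormal_Ioi_toReal (t : ℝ) : (stdNormal (Set.Ioi t)).toReal = 1 - PhiR t := by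
  rw [stdNormal_Ioi, PhiR, ENNReal.toReal_sub_of_le prob_le_one ENNReal.one_ne_top,
    ENNReal.toReal_one]

lemma PhiR_strictMono : StrictMono PhiR := by
  intro s t h
  have hunion : stdNormal (Set.Iic s) + stdNormal (Set.Ioo s t)
      ≤ stdNormal (Set.Iic t) := by
    rw [← measure_union (by
      simp only [Set.disjoint_left, Set.mem_Iic, Set.mem_Ioo]
      intro a ha hb; linarith [hb.1]) measurableSet_Ioo]
    exact measure_mono (by
      intro x hx
      rcases hx with hx | hx
      · exact le_trans hx h.le
      · exact hx.2.le)
  have hpos : 0 < stdNormal (Set.Ioo s t) :=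
    isOpen_Ioo.measure_pos stdNormal (Set.nonempty_Ioo.2 h)
  have hlt : stdNormal (Set.Iic s) < stdNormal (Set.Iic t) :=
    lt_of_lt_of_le (ENNReal.lt_add_right (measure_ne_top _ _) hpos.ne') hunion
  exact ENNReal.toReal_lt_toReal (measure_ne_top _ _) (measure_ne_top _ _) |>.2 hlt

lemma stdNormal_map_neg : Measure.map (fun x : ℝ => -1 * x) stdNormal = stdNormal := by
  rw [show stdNormal = gaussianReal 0 1 from rfl,
    show (fun x : ℝ => -1 * x) = (((-1 : ℝ)) * ·) from rfl, gaussianReal_map_const_mul]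
  norm_num

lemma PhiR_zero : PhiR 0 = 1/2 := by
  have h1 : stdNormal (Set.Iic 0) = stdNormal (Set.Ici 0) := by
    conv_lhs => rw [← stdNormal_map_neg]
    rw [Measure.map_apply (by fun_prop) measurableSet_Iic]
    congr 1
    ext x
    simp [neg_nonpos]
  have h2 : stdNormal (Set.Ici 0) = stdNormal (Set.Ioi 0) := by
    apply le_antisymm
    · calc stdNormal (Set.Ici 0) ≤ stdNormal ({0} ∪ Set.Ioi 0) := measure_mono (by
        intro x hx
        rcases eq_or_lt_of_le (Set.mem_Ici.mp hx : (0:ℝ) ≤ x) with h | h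
        · exact Or.inl (by simp [← h])
        · exact Or.inr h)
      _ ≤ stdNormal {0} + stdNormal (Set.Ioi 0) := measure_union_le _ _
      _ = stdNormal (Set.Ioi 0) := by rw [stdNormal_singleton, zero_add]
    · exact measure_mono Set.Ioi_subset_Ici_self
  have h3 : (stdNormal (Set.Ioi 0)).toReal = 1 - PhiR 0 := stdNormal_Ioi_toReal 0
  have h4 : (stdNormal (Set.Ioi 0)).toReal = PhiR 0 := by
    rw [← h2, ← h1]; rfl
  linarith [h3, h4]

lemma FF_le {ω : ℝ} (hω : ω ∈ Set.Ico (0:ℝ) 1) (zc : ℝ) {c : ℝ} (hc : 0 ≤ c) :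
    FF zc ω c ≤ (1 - PhiR zc) + (1 - PhiR c) := by
  have hcc : c ≤ c / uu ω := by
    rw [le_div_iff₀ (uu_pos hω.2)]
    exact mul_le_of_le_one_right hc (uu_le_one hω.1)
  have hb : stdNormal2 (ESet zc ω c)
      ≤ stdNormal (Set.Ioi zc) + stdNormal (Set.Ioi c) := by
    rw [ESet_eq hω]
    refine le_trans (measure_union_le _ _) (add_le_add ?_ ?_)
    · rw [show {p : ℝ × ℝ | zc < p.1} = {p : ℝ × ℝ | p.1 ∈ Set.Ioi zc} from rfl,
        measure_fstset measurableSet_Ioi]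
    · rw [measure_linf_preimage hω measurableSet_Ioi]
      exact measure_mono (Set.Ioi_subset_Ioi hcc)
  calc FF zc ω c ≤ (stdNormal (Set.Ioi zc) + stdNormal (Set.Ioi c)).toReal :=
        ENNReal.toReal_mono (by finiteness) hb
    _ = (1 - PhiR zc) + (1 - PhiR c) := by
        rw [ENNReal.toReal_add (measure_ne_top _ _) (measure_ne_top _ _),
          stdNormal_Ioi_toReal, stdNormal_Ioi_toReal]

lemma FF_ge {ω : ℝ} (hω : ω ∈ Set.Ico (0:ℝ) 1) (zc : ℝ) :
    1 - PhiR 0 ≤ FF zc ω 0 := by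
  have hb : stdNormal (Set.Ioi 0) ≤ stdNormal2 (ESet zc ω 0) := by
    rw [ESet_eq hω, zero_div, ← measure_linf_preimage hω measurableSet_Ioi]
    exact measure_mono Set.subset_union_right
  calc (1:ℝ) - PhiR 0 = (stdNormal (Set.Ioi 0)).toReal := (stdNormal_Ioi_toReal 0).symm
    _ ≤ FF zc ω 0 := ENNReal.toReal_mono (measure_ne_top _ _) hb

lemma FF_omega_zero (zc c : ℝ) : FF zc 0 c = 1 - PhiR (min zc c) := by
  have hz : ∀ p : ℝ × ℝ, Ztilde2 0 p = 0 := by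
    intro p; simp [Ztilde2]
  have : ESet zc 0 c = {p : ℝ × ℝ | p.1 ∈ Set.Ioi (min zc c)} := by
    ext p; simp [ESet, hz, Set.mem_Ioi]
  rw [FF, this, measure_fstset measurableSet_Ioi, stdNormal_Ioi_toReal]

lemma null_fst (t : ℝ) : stdNormal2 {p : ℝ × ℝ | p.1 = t} = 0 := by
  have h : {p : ℝ × ℝ | p.1 = t} = {p : ℝ × ℝ | p.1 ∈ ({t} : Set ℝ)} := rfl
  rw [h, measure_fstset (measurableSet_singleton t), stdNormal_singleton]

lemma null_lin {ω : ℝ} (hω : ω ∈ Set.Ico (0:ℝ) 1) (c : ℝ) :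
    stdNormal2 {p : ℝ × ℝ | Ztilde2 ω p + c = p.1} = 0 := by
  have h : {p : ℝ × ℝ | Ztilde2 ω p + c = p.1} = linf ω ⁻¹' {c / uu ω} := by
    ext p; simp [eq_iff hω c p]
  rw [h, measure_linf_preimage hω (measurableSet_singleton _), stdNormal_singleton]

lemma measure_ESet_tendsto (zc : ℝ) {ω c : ℝ} (hω : ω ∈ Set.Ico (0:ℝ) 1)
    {q : ℕ → ℝ × ℝ} (hq : Tendsto q atTop (𝓝 (ω, c))) :
    Tendsto (fun n => stdNormal2 (ESet zc (q n).1 (q n).2)) atTop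
      (𝓝 (stdNormal2 (ESet zc ω c))) := by
  apply tendsto_measure_of_ae_tendsto_indicator_of_isFiniteMeasure atTop
    (isOpen_ESet zc ω c).measurableSet (fun n => (isOpen_ESet zc _ _).measurableSet)
  have hN : stdNormal2 ({p : ℝ × ℝ | Ztilde2 ω p + c = p.1} ∪ {p : ℝ × ℝ | p.1 = zc}) = 0 :=
    measure_union_null (null_lin hω c) (null_fst zc)
  have hae := (MeasureTheory.measure_eq_zero_iff_ae_notMem).mp hN
  filter_upwards [hae] with p hp
  simp only [Set.mem_union, Set.mem_setOf_eq, not_or] at hp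
  obtain ⟨h1, h2⟩ := hp
  have hmin : min zc (Ztilde2 ω p + c) ≠ p.1 := by
    rcases min_cases zc (Ztilde2 ω p + c) with ⟨hm, _⟩ | ⟨hm, _⟩ <;> rw [hm]
    · exact fun hh => h2 hh.symm
    · exact h1
  have hcont : Tendsto (fun n => min zc (Ztilde2 (q n).1 p + (q n).2)) atTop
      (𝓝 (min zc (Ztilde2 ω p + c))) := by
    have hc : Continuous fun x : ℝ × ℝ => min zc (Ztilde2 x.1 p + x.2) := by
      unfold Ztilde2; fun_prop
    exact (hc.tendsto (ω, c)).comp hq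
  rcases lt_or_gt_of_ne hmin with h | h
  · filter_upwards [hcont.eventually_lt_const h] with n hn
    simp only [ESet, Set.mem_setOf_eq]
    exact iff_of_true hn h
  · filter_upwards [hcont.eventually_const_lt h] with n hn
    simp only [ESet, Set.mem_setOf_eq]
    exact iff_of_false (not_lt.mpr hn.le) (not_lt.mpr h.le)

lemma FF_tendsto (zc : ℝ) {ω c : ℝ} (hω : ω ∈ Set.Ico (0:ℝ) 1)
    {q : ℕ → ℝ × ℝ} (hq : Tendsto q atTop (𝓝 (ω, c))) :
    Tendsto (fun n => FF zc (q n).1 (q n).2) atTop (𝓝 (FF zc ω c)) := by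
  have h1 := measure_ESet_tendsto zc hω hq
  have h2 : Tendsto ENNReal.toReal (𝓝 (stdNormal2 (ESet zc ω c)))
      (𝓝 (stdNormal2 (ESet zc ω c)).toReal) :=
    ENNReal.tendsto_toReal (measure_ne_top stdNormal2 (ESet zc ω c))
  exact h2.comp h1

set_option maxHeartbeats 2000000 in
lemma FF_tendsto2 (zc : ℝ) {ω c : ℝ} (hω : ω ∈ Set.Ico (0:ℝ) 1)
    {w v : ℕ → ℝ} (hw : Tendsto w atTop (𝓝 ω)) (hv : Tendsto v atTop (𝓝 c)) :
    Tendsto (fun n => FF zc (w n) (v n)) atTop (𝓝 (FF zc ω c)) := by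
  have h := FF_tendsto zc hω (hw.prodMk_nhds hv)
  exact h

lemma FF_continuous_c (zc : ℝ) {ω : ℝ} (hω : ω ∈ Set.Ico (0:ℝ) 1) :
    Continuous fun c => FF zc ω c := by
  rw [continuous_iff_continuousAt]
  intro c₀
  have key : ∀ v : ℕ → ℝ, Tendsto v atTop (𝓝 c₀) →
      Tendsto (fun n => FF zc ω (v n)) atTop (𝓝 (FF zc ω c₀)) := by
    intro v hv
    exact FF_tendsto2 zc hω tendsto_const_nhds hv
  exact tendsto_iff_seq_tendsto.mpr key

lemma FF_strict (zc : ℝ) {ω : ℝ} (hω : ω ∈ Set.Ioo (0:ℝ) 1) {c1 c2 : ℝ} (h : c1 < c2)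
    (heq : FF zc ω c1 = FF zc ω c2) : False := by
  have hω' : ω ∈ Set.Ico (0:ℝ) 1 := ⟨hω.1.le, hω.2⟩
  have hupos := uu_pos hω.2
  have hsub : ESet zc ω c2 ⊆ ESet zc ω c1 := by
    intro p hp
    simp only [ESet, Set.mem_setOf_eq] at hp ⊢
    exact lt_of_le_of_lt (min_le_min le_rfl (by linarith)) hp
  have hμeq : stdNormal2 (ESet zc ω c1) = stdNormal2 (ESet zc ω c2) :=
    (ENNReal.toReal_eq_toReal_iff' (measure_ne_top _ _) (measure_ne_top _ _)).mp heq
  have hdiff : stdNormal2 (ESet zc ω c1 \ ESet zc ω c2) = 0 := by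
    rw [measure_diff hsub (isOpen_ESet zc ω c2).measurableSet.nullMeasurableSet
      (measure_ne_top _ _), hμeq, tsub_self]
  have hlt : c1 / uu ω < c2 / uu ω := by
    rw [div_lt_div_iff₀ hupos hupos]
    nlinarith
  set O : Set (ℝ × ℝ) :=
    {p : ℝ × ℝ | p.1 < zc} ∩ linf ω ⁻¹' (Set.Ioo (c1 / uu ω) (c2 / uu ω)) with hO
  have hOopen : IsOpen O :=
    (isOpen_Iio.preimage continuous_fst).inter (isOpen_Ioo.preimage (linf_continuous ω))
  have hbne : bb ω ≠ 0 := by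
    have hs : 0 < sqq ω := Real.sqrt_pos.2 (by nlinarith [hω.1, hω.2])
    have hd : 0 < sqq ω / uu ω := div_pos hs hupos
    rw [bb]; linarith
  have hOne : O.Nonempty := by
    set m := (c1 / uu ω + c2 / uu ω) / 2 with hm
    refine ⟨(zc - 1, (m - uu ω * (zc - 1)) / bb ω), ⟨?_, ?_⟩⟩
    · simp only [Set.mem_setOf_eq]; linarith
    · have hval : linf ω (zc - 1, (m - uu ω * (zc-1)) / bb ω) = m := by
        simp only [linf]
        field_simp
        ring
      simp only [Set.mem_preimage, hval, Set.mem_Ioo]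
      constructor <;> (rw [hm]; linarith)
  have hOsub : O ⊆ ESet zc ω c1 \ ESet zc ω c2 := by
    intro p hp
    obtain ⟨hp1, hp2⟩ := hp
    simp only [Set.mem_setOf_eq] at hp1
    simp only [Set.mem_preimage, Set.mem_Ioo] at hp2
    constructor
    · simp only [ESet, Set.mem_setOf_eq, min_lt_iff]
      exact Or.inr ((lt_iff hω' c1 p).mpr hp2.1)
    · simp only [ESet, Set.mem_setOf_eq, min_lt_iff, not_or, not_lt]
      have h2 : ¬ (Ztilde2 ω p + c2 < p.1) := by
        rw [lt_iff hω' c2 p]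
        exact not_lt.mpr hp2.2.le
      exact ⟨hp1.le, not_lt.mp h2⟩
  have hpos := hOopen.measure_pos stdNormal2 hOne
  have h0 : stdNormal2 O = 0 := measure_mono_null hOsub hdiff
  rw [h0] at hpos
  exact lt_irrefl _ hpos


/-- existence of the continuous critical-value function `c : [0,1) → [0, z_{1-γ}]`
with `P(Z₁ > min{z_{1-α+γ}, Z̃₂ + c(ω)}) = α` and `c 0 = z_{1-α}`. -/
theorem stmt0 (α γ : ℝ) (hα : α ∈ Set.Ioo (0 : ℝ) (1 / 2)) (hγ : γ ∈ Set.Ioo 0 α)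
    (zαγ zγ zα : ℝ)
    (hzαγ : stdNormal (Set.Iic zαγ) = ENNReal.ofReal (1 - α + γ))
    (hzγ : stdNormal (Set.Iic zγ) = ENNReal.ofReal (1 - γ))
    (hzα : stdNormal (Set.Iic zα) = ENNReal.ofReal (1 - α)) :
    ∃ c : ℝ → ℝ,
      (∀ ω ∈ Set.Ico (0 : ℝ) 1, c ω ∈ Set.Icc 0 zγ) ∧
      (∀ ω ∈ Set.Ico (0 : ℝ) 1,
        stdNormal2 {p : ℝ × ℝ | min zαγ (Ztilde2 ω p + c ω) < p.1} = ENNReal.ofReal α) ∧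
      ContinuousOn c (Set.Ico 0 1) ∧
      c 0 = zα := by
  classical
  obtain ⟨hα0, hα2⟩ := hα
  obtain ⟨hγ0, hγα⟩ := hγ
  have hPαγ : PhiR zαγ = 1 - α + γ := by
    rw [PhiR, hzαγ, ENNReal.toReal_ofReal (by linarith)]
  have hPγ : PhiR zγ = 1 - γ := by
    rw [PhiR, hzγ, ENNReal.toReal_ofReal (by linarith)]
  have hPα : PhiR zα = 1 - α := by
    rw [PhiR, hzα, ENNReal.toReal_ofReal (by linarith)]
  have hP0 := PhiR_zero
  have hmono := PhiR_strictMono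
  have hzγ_pos : 0 < zγ := hmono.lt_iff_lt.mp (by rw [hPγ, hP0]; linarith)
  have hzα_lt_zαγ : zα < zαγ := hmono.lt_iff_lt.mp (by rw [hPα, hPαγ]; linarith)
  have hex : ∀ ω ∈ Set.Ico (0:ℝ) 1, ∃ c ∈ Set.Icc 0 zγ, FF zαγ ω c = α := by
    intro ω hω
    have h1 : FF zαγ ω zγ ≤ α := by
      have := FF_le hω zαγ hzγ_pos.le
      rw [hPαγ, hPγ] at this; linarith
    have h2 : α ≤ FF zαγ ω 0 := by
      have := FF_ge hω zαγ
      rw [hP0] at this; linarith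
    have hIvt := intermediate_value_Icc' hzγ_pos.le
      ((FF_continuous_c zαγ hω).continuousOn)
    obtain ⟨c, hc1, hc2⟩ := hIvt (⟨h1, h2⟩ : α ∈ Set.Icc (FF zαγ ω zγ) (FF zαγ ω 0))
    exact ⟨c, hc1, hc2⟩
  have uniq0 : ∀ c : ℝ, FF zαγ 0 c = α → c = zα := by
    intro c hc
    rw [FF_omega_zero] at hc
    have hPm : PhiR (min zαγ c) = PhiR zα := by rw [hPα]; linarith
    have hmineq : min zαγ c = zα := hmono.injective hPm
    rcases min_eq_iff.mp hmineq with ⟨h, _⟩ | ⟨h, _⟩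
    · exact absurd h (by linarith)
    · exact h
  have huniq : ∀ ω ∈ Set.Ico (0:ℝ) 1, ∀ c1 c2 : ℝ,
      FF zαγ ω c1 = α → FF zαγ ω c2 = α → c1 = c2 := by
    intro ω hω c1 c2 h1 h2
    rcases eq_or_lt_of_le hω.1 with h0 | h0
    · rw [← h0] at h1 h2
      rw [uniq0 c1 h1, uniq0 c2 h2]
    · rcases lt_trichotomy c1 c2 with h | h | h
      · exact (FF_strict zαγ ⟨h0, hω.2⟩ h (h1.trans h2.symm)).elim
      · exact h
      · exact (FF_strict zαγ ⟨h0, hω.2⟩ h (h2.trans h1.symm)).elim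
  have hchoice : ∀ ω : ℝ, ∃ c : ℝ,
      ω ∈ Set.Ico (0:ℝ) 1 → (c ∈ Set.Icc 0 zγ ∧ FF zαγ ω c = α) := by
    intro ω
    by_cases h : ω ∈ Set.Ico (0:ℝ) 1
    · obtain ⟨c, hc1, hc2⟩ := hex ω h
      exact ⟨c, fun _ => ⟨hc1, hc2⟩⟩
    · exact ⟨0, fun hh => absurd hh h⟩
  choose cf hcf using hchoice
  have hmemf : ∀ ω, ω ∈ Set.Ico (0:ℝ) 1 → cf ω ∈ Set.Icc 0 zγ := fun ω h => (hcf ω h).1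
  have hFFf : ∀ ω, ω ∈ Set.Ico (0:ℝ) 1 → FF zαγ ω (cf ω) = α := fun ω h => (hcf ω h).2
  refine ⟨cf, hmemf, ?_, ?_, ?_⟩
  · intro ω hω
    have h := hFFf ω hω
    have h2 : stdNormal2 (ESet zαγ ω (cf ω)) = ENNReal.ofReal α := by
      rw [← h, FF, ENNReal.ofReal_toReal (measure_ne_top _ _)]
    exact h2
  · intro ω₀ hω₀
    have key : ∀ w : ℕ → ℝ, (∀ n, w n ∈ Set.Ico (0:ℝ) 1) → Tendsto w atTop (𝓝 ω₀) →
        Tendsto (fun n => cf (w n)) atTop (𝓝 (cf ω₀)) := by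
      intro w hwmem hw
      apply tendsto_of_subseq_tendsto
      intro ns hns
      obtain ⟨cstar, hcmem, ms, hmsmono, hmstend⟩ :=
        (isCompact_Icc (a := (0:ℝ)) (b := zγ)).tendsto_subseq
          (x := fun n => cf (w (ns n))) (fun n => hmemf _ (hwmem _))
      refine ⟨ms, ?_⟩
      have hwseq : Tendsto (fun n => w (ns (ms n))) atTop (𝓝 ω₀) :=
        hw.comp (hns.comp hmsmono.tendsto_atTop)
      have hFt : Tendsto (fun n => FF zαγ (w (ns (ms n))) (cf (w (ns (ms n))))) atTop
          (𝓝 (FF zαγ ω₀ cstar)) := FF_tendsto2 zαγ hω₀ hwseq hmstend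
      have hconst : ∀ n, FF zαγ (w (ns (ms n))) (cf (w (ns (ms n)))) = α :=
        fun n => hFFf _ (hwmem _)
      have hlim : FF zαγ ω₀ cstar = α := by
        have h2 : Tendsto (fun _ : ℕ => α) atTop (𝓝 (FF zαγ ω₀ cstar)) := hFt.congr hconst
        exact tendsto_nhds_unique h2 tendsto_const_nhds
      have hcs : cstar = cf ω₀ := huniq ω₀ hω₀ cstar (cf ω₀) hlim (hFFf ω₀ hω₀)
      rw [← hcs]
      exact hmstend
    have hseq : ∀ w : ℕ → ℝ, Tendsto w atTop (𝓝[Set.Ico (0:ℝ) 1] ω₀) →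
        Tendsto (fun n => cf (w n)) atTop (𝓝 (cf ω₀)) := by
      intro w hw
      obtain ⟨hw1, hw2⟩ := tendsto_nhdsWithin_iff.mp hw
      set w' : ℕ → ℝ := fun n => if w n ∈ Set.Ico (0:ℝ) 1 then w n else ω₀ with hw'
      have hmem' : ∀ n, w' n ∈ Set.Ico (0:ℝ) 1 := by
        intro n
        simp only [hw']
        split_ifs with h
        exacts [h, hω₀]
      have hevent : ∀ᶠ n in atTop, w n = w' n :=
        hw2.mono (fun n h => by simp only [hw']; rw [if_pos h])
      have hw'1 : Tendsto w' atTop (𝓝 ω₀) := hw1.congr' hevent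
      exact (key w' hmem' hw'1).congr' (hevent.mono fun n h => by
        show cf (w' n) = cf (w n); rw [h])
    exact tendsto_iff_seq_tendsto.mpr hseq
  · have h00 : (0:ℝ) ∈ Set.Ico (0:ℝ) 1 := ⟨le_refl 0, one_pos⟩
    exact uniq0 (cf 0) (hFFf 0 h00)
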